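/- Let n = (1,…,1), m = (m,1,…,1) (t blocks), with m ≥ 2, q a prime power, and t > q^m + 1. Then there is no sum-rank-metric code C ⊆ Mat(n,m,F_q) with minimum sum-rank distance 3 and |C| = q^{t−2}; i.e., no MSRD code with d = 3 exists for these parameters. -/

import Mathlib

private lemma rank_neg' {F : Type*} [Field F] {a b : ℕ} (A : Matrix (Fin a) (Fin b) F) :
    (-A).rank = A.rank := by
  have h : LinearMap.range (-A).mulVecLin = LinearMap.range A.mulVecLin := by
    ext x
    simp only [LinearMap.mem_range, Matrix.mulVecLin_apply, Matrix.neg_mulVec]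
    constructor
    · rintro ⟨v, hv⟩; exact ⟨-v, by simp [Matrix.mulVec_neg, hv]⟩
    · rintro ⟨v, hv⟩; exact ⟨-v, by simp [Matrix.mulVec_neg, hv]⟩
  rw [Matrix.rank, Matrix.rank, h]

/-- The sum-rank of a tuple of matrices. -/
noncomputable def srk {F : Type*} [Field F] {t : ℕ} {n m : Fin t → ℕ}
    (X : ∀ i, Matrix (Fin (n i)) (Fin (m i)) F) : ℕ :=
  ∑ i, (X i).rank

/-- The sum-rank-metric graph. -/
def srGraph (F : Type*) [Field F] {t : ℕ} (n m : Fin t → ℕ) :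
    SimpleGraph (∀ i : Fin t, Matrix (Fin (n i)) (Fin (m i)) F) where
  Adj X Y := srk (fun i => X i - Y i) = 1
  symm := by
    constructor
    intro X Y h
    unfold srk at h ⊢
    calc ∑ i, (Y i - X i).rank
        = ∑ i, (X i - Y i).rank := by
          refine Finset.sum_congr rfl fun i _ => ?_
          rw [show Y i - X i = -(X i - Y i) by abel, rank_neg']
      _ = 1 := h
  loopless := by
    constructor
    intro X h
    unfold srk at h
    simp at h

open Classical in
lemma rank_one_row {F : Type*} [Field F] {k : ℕ} (A : Matrix (Fin 1) (Fin k) F) :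
    A.rank = if A = 0 then 0 else 1 := by
  split_ifs with h
  · simp [h, Matrix.rank_zero]
  · have h1 : A.rank ≤ 1 := by simpa using A.rank_le_card_height
    have h0 : A.rank ≠ 0 := by
      intro hr
      apply h
      have hbot : LinearMap.range A.mulVecLin = ⊥ := by
        rw [Matrix.rank] at hr
        exact Submodule.finrank_eq_zero.mp hr
      ext i j
      have hv : A.mulVec (Pi.single j 1) = 0 := by
        have hm : A.mulVec (Pi.single j 1) ∈ LinearMap.range A.mulVecLin :=
          ⟨Pi.single j 1, rfl⟩
        rw [hbot] at hm
        simpa using hm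
      have := congrFun hv i
      simpa [Matrix.mulVec_single] using this
    omega

open Classical in
lemma srk_eq_card {F : Type*} [Field F] {t : ℕ} {m : Fin t → ℕ}
    (X Y : ∀ i, Matrix (Fin 1) (Fin (m i)) F) :
    srk (fun i => X i - Y i) = (Finset.univ.filter (fun i => X i ≠ Y i)).card := by
  unfold srk
  rw [Finset.card_filter]
  refine Finset.sum_congr rfl fun i _ => ?_
  rw [rank_one_row]
  by_cases h : X i = Y i <;> simp [h, sub_eq_zero]

/-- Non-existence of MSRD codes with minimum distance 3 in
$\mathrm{Mat}((1,\dots,1),(M,1,\dots,1),\mathbb{F}_q)$ when $t > q^M + 1$: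
no code of cardinality $q^{t-2}$ with pairwise sum-rank distance at least 3 exists. -/
theorem no_msrd_d3 (F : Type*) [Field F] [Fintype F]
    (t M : ℕ) (ht : 2 ≤ t) (hM : 2 ≤ M) (m : Fin t → ℕ) (i₀ : Fin t)
    (hm₀ : m i₀ = M) (hm₁ : ∀ i : Fin t, i ≠ i₀ → m i = 1)
    (htq : Fintype.card F ^ M + 1 < t) :
    ¬ ∃ C : Finset (∀ i : Fin t, Matrix (Fin 1) (Fin (m i)) F),
        C.card = Fintype.card F ^ (t - 2) ∧
        ∀ X ∈ C, ∀ Y ∈ C, X ≠ Y → 3 ≤ srk (fun i => X i - Y i) := by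
  classical
  rintro ⟨C, hcard, hdist⟩
  set q := Fintype.card F with hq
  -- the key distance lemma
  have key : ∀ X ∈ C, ∀ Y ∈ C, X ≠ Y → ∀ s : Finset (Fin t),
      (∀ i, i ∉ s → X i = Y i) →
      3 ≤ s.card ∧ (s.card ≤ 3 → ∀ i ∈ s, X i ≠ Y i) := by
    intro X hX Y hY hne s hs
    have h3 := hdist X hX Y hY hne
    rw [srk_eq_card] at h3
    have hsub : (Finset.univ.filter (fun i => X i ≠ Y i)) ⊆ s := by
      intro i hi
      rw [Finset.mem_filter] at hi
      by_contra h
      exact hi.2 (hs i h)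
    have hcards : 3 ≤ s.card := le_trans h3 (Finset.card_le_card hsub)
    refine ⟨hcards, fun hc i his => ?_⟩
    have heq : (Finset.univ.filter (fun i => X i ≠ Y i)) = s :=
      Finset.eq_of_subset_of_card_le hsub (by omega)
    rw [← heq] at his
    exact (Finset.mem_filter.mp his).2
  -- a second index
  obtain ⟨j₁, hj₁⟩ : ∃ j₁ : Fin t, j₁ ≠ i₀ :=
    Fintype.exists_ne_of_one_lt_card (by simpa using lt_of_lt_of_le one_lt_two ht) i₀
  -- entry machinery
  have hmi : ∀ i : Fin t, i ≠ i₀ → 0 < m i := fun i hi => by rw [hm₁ i hi]; norm_num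
  let z : ∀ i : Fin t, i ≠ i₀ → Fin (m i) := fun i hi => ⟨0, hmi i hi⟩
  have ent_ext : ∀ (i : Fin t) (hi : i ≠ i₀) (A B : Matrix (Fin 1) (Fin (m i)) F),
      A 0 (z i hi) = B 0 (z i hi) → A = B := by
    intro i hi A B hAB
    ext r c
    have hr : r = 0 := Subsingleton.elim r 0
    have hc : c = z i hi := by
      have h1 := hm₁ i hi
      have h2 := c.2
      apply Fin.ext
      show c.1 = 0
      omega
    rw [hr, hc]
    exact hAB
  -- the index set S
  let S : Finset (Fin t) := (Finset.univ.erase i₀).erase j₁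
  have hmemS : ∀ i : Fin t, i ∈ S ↔ i ≠ j₁ ∧ i ≠ i₀ := by
    intro i; simp [S, Finset.mem_erase]
  have hSne : ∀ i ∈ S, i ≠ i₀ := fun i hi => ((hmemS i).mp hi).2
  have hSnj : ∀ i ∈ S, i ≠ j₁ := fun i hi => ((hmemS i).mp hi).1
  have hScard : S.card = t - 2 := by
    have h1 : j₁ ∈ Finset.univ.erase i₀ := Finset.mem_erase.mpr ⟨hj₁, Finset.mem_univ _⟩
    show ((Finset.univ.erase i₀).erase j₁).card = t - 2
    rw [Finset.card_erase_of_mem h1, Finset.card_erase_of_mem (Finset.mem_univ i₀)]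
    simp [Finset.card_univ]
    omega
  -- the projection
  let T := {i : Fin t // i ∈ S} → F
  let f : {X // X ∈ C} → T := fun X i => (X : ∀ i, Matrix (Fin 1) (Fin (m i)) F) i.1 0 (z i.1 (hSne i.1 i.2))
  have hfinj : Function.Injective f := by
    intro X Y hXY
    apply Subtype.ext
    by_contra hne
    have hagree : ∀ i, i ∉ ({i₀, j₁} : Finset (Fin t)) → X.1 i = Y.1 i := by
      intro i hi
      simp only [Finset.mem_insert, Finset.mem_singleton] at hi
      push_neg at hi
      have hiS : i ∈ S := (hmemS i).mpr ⟨hi.2, hi.1⟩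
      exact ent_ext i (hSne i hiS) _ _ (congrFun hXY ⟨i, hiS⟩)
    have h3 := (key X.1 X.2 Y.1 Y.2 hne {i₀, j₁} hagree).1
    have hc2 : ({i₀, j₁} : Finset (Fin t)).card ≤ 2 :=
      le_trans (Finset.card_insert_le _ _) (by simp)
    omega
  have hTcard : Fintype.card T = q ^ (t - 2) := by
    show Fintype.card ({i : Fin t // i ∈ S} → F) = q ^ (t - 2)
    rw [Fintype.card_fun, Fintype.card_coe, hScard]
  have hCcard : Fintype.card {X // X ∈ C} = q ^ (t - 2) := by
    rw [Fintype.card_coe, hcard]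
  have hfbij : Function.Bijective f :=
    (Fintype.bijective_iff_injective_and_card f).mpr ⟨hfinj, by rw [hCcard, hTcard]⟩
  let pick : T → {X // X ∈ C} := Function.surjInv hfbij.2
  have hpick : ∀ w, f (pick w) = w := fun w => Function.surjInv_eq hfbij.2 w
  let P : T → ∀ i, Matrix (Fin 1) (Fin (m i)) F := fun w => (pick w).1
  have hPC : ∀ w, P w ∈ C := fun w => (pick w).2
  have hPe : ∀ (w : T) (i : Fin t) (hi : i ∈ S),
      P w i 0 (z i (hSne i hi)) = w ⟨i, hi⟩ := by
    intro w i hi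
    exact congrFun (hpick w) ⟨i, hi⟩
  have hPinj : ∀ w w' : T, P w = P w' → w = w' := by
    intro w w' h
    rw [← hpick w, ← hpick w']
    funext i
    show P w i.1 0 _ = P w' i.1 0 _
    rw [h]
  -- the special codewords
  obtain ⟨v, hv⟩ := exists_ne ((P (fun _ => 0)) j₁ 0 (z j₁ hj₁))
  let wb : {i : Fin t // i ∈ S} → F → T := fun j₂ b i => if i = j₂ then b else 0
  let g : {i : Fin t // i ∈ S} → F → F := fun j₂ b => (P (wb j₂ b)) j₁ 0 (z j₁ hj₁)
  have hwbe : ∀ (j₂ : {i // i ∈ S}) (b : F) (i : {i // i ∈ S}),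
      wb j₂ b i = if i = j₂ then b else 0 := fun _ _ _ => rfl
  have hginj : ∀ j₂, Function.Injective (g j₂) := by
    intro j₂ b b' hbb'
    by_contra hne
    have hXne : P (wb j₂ b) ≠ P (wb j₂ b') := by
      intro h
      have hw := hPinj _ _ h
      have := congrFun hw j₂
      rw [hwbe, hwbe, if_pos rfl, if_pos rfl] at this
      exact hne this
    have hagree : ∀ i, i ∉ ({i₀, j₂.1} : Finset (Fin t)) →
        P (wb j₂ b) i = P (wb j₂ b') i := by
      intro i hi
      simp only [Finset.mem_insert, Finset.mem_singleton] at hi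
      push_neg at hi
      by_cases hij : i = j₁
      · subst hij
        exact ent_ext i hj₁ _ _ hbb'
      · have hiS : i ∈ S := (hmemS i).mpr ⟨hij, hi.1⟩
        apply ent_ext i (hSne i hiS)
        rw [hPe _ i hiS, hPe _ i hiS, hwbe, hwbe,
          if_neg (fun h => hi.2 (congrArg Subtype.val h)), 
          if_neg (fun h => hi.2 (congrArg Subtype.val h))]
    have h3 := (key _ (hPC (wb j₂ b)) _ (hPC (wb j₂ b')) hXne {i₀, j₂.1} hagree).1
    have hc2 : ({i₀, j₂.1} : Finset (Fin t)).card ≤ 2 :=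
      le_trans (Finset.card_insert_le _ _) (by simp)
    omega
  have hgs : ∀ j₂, ∃ b, g j₂ b = v := fun j₂ =>
    (Finite.injective_iff_surjective.mp (hginj j₂)) v
  choose b hb using hgs
  have hb0 : ∀ j₂, b j₂ ≠ 0 := by
    intro j₂ h0
    apply hv
    rw [← hb j₂]
    show (P (wb j₂ (b j₂))) j₁ 0 (z j₁ hj₁) = (P (fun _ => 0)) j₁ 0 (z j₁ hj₁)
    congr 1
    congr 1
    funext i
    rw [hwbe, h0]
    simp
  -- entries of the special codewords
  have hYe : ∀ (j₂ : {i // i ∈ S}) (i : Fin t) (hi : i ∈ S),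
      P (wb j₂ (b j₂)) i 0 (z i (hSne i hi)) = if i = j₂.1 then b j₂ else 0 := by
    intro j₂ i hi
    rw [hPe _ i hi, hwbe]
    by_cases h : i = j₂.1
    · rw [if_pos (Subtype.ext h), if_pos h]
    · rw [if_neg (fun hh => h (congrArg Subtype.val hh)), if_neg h]
  -- distinctness of the i₀ components, pairwise among the Y's
  have hYne : ∀ j₂ j₃ : {i // i ∈ S}, j₂ ≠ j₃ →
      P (wb j₂ (b j₂)) i₀ ≠ P (wb j₃ (b j₃)) i₀ := by
    intro j₂ j₃ hne23
    have hne23' : j₂.1 ≠ j₃.1 := fun h => hne23 (Subtype.ext h)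
    have hXne : P (wb j₂ (b j₂)) ≠ P (wb j₃ (b j₃)) := by
      intro h
      have := congrArg (fun X => X j₂.1 0 (z j₂.1 (hSne j₂.1 j₂.2))) h
      rw [hYe j₂ j₂.1 j₂.2, hYe j₃ j₂.1 j₂.2, if_pos rfl, if_neg hne23'] at this
      exact hb0 j₂ this
    have hagree : ∀ i, i ∉ ({i₀, j₂.1, j₃.1} : Finset (Fin t)) →
        P (wb j₂ (b j₂)) i = P (wb j₃ (b j₃)) i := by
      intro i hi
      simp only [Finset.mem_insert, Finset.mem_singleton] at hi
      push_neg at hi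
      by_cases hij : i = j₁
      · subst hij
        exact ent_ext i hj₁ _ _ (by rw [show (P (wb j₂ (b j₂))) i 0 (z i hj₁) = v from hb j₂,
            show (P (wb j₃ (b j₃))) i 0 (z i hj₁) = v from hb j₃])
      · have hiS : i ∈ S := (hmemS i).mpr ⟨hij, hi.1⟩
        apply ent_ext i (hSne i hiS)
        rw [hYe j₂ i hiS, hYe j₃ i hiS, if_neg hi.2.1, if_neg hi.2.2]
    have hcard3 : ({i₀, j₂.1, j₃.1} : Finset (Fin t)).card ≤ 3 := by
      apply le_trans (Finset.card_insert_le _ _)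
      have := le_trans (Finset.card_insert_le j₂.1 {j₃.1}) (by simp : ({j₃.1} : Finset (Fin t)).card + 1 ≤ 2)
      omega
    have hk := (key _ (hPC (wb j₂ (b j₂))) _ (hPC (wb j₃ (b j₃))) hXne _ hagree).2 hcard3
    exact hk i₀ (Finset.mem_insert_self _ _)
  -- distinctness of X₀'s i₀ component from the Y's
  have hX₀ne : ∀ j₂ : {i // i ∈ S},
      P (fun _ => 0) i₀ ≠ P (wb j₂ (b j₂)) i₀ := by
    intro j₂
    have hXne : P (fun _ => 0) ≠ P (wb j₂ (b j₂)) := by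
      intro h
      have := congrArg (fun X => X j₂.1 0 (z j₂.1 (hSne j₂.1 j₂.2))) h
      rw [hPe _ j₂.1 j₂.2, hYe j₂ j₂.1 j₂.2, if_pos rfl] at this
      exact hb0 j₂ this.symm
    have hagree : ∀ i, i ∉ ({i₀, j₁, j₂.1} : Finset (Fin t)) →
        P (fun _ => 0) i = P (wb j₂ (b j₂)) i := by
      intro i hi
      simp only [Finset.mem_insert, Finset.mem_singleton] at hi
      push_neg at hi
      have hiS : i ∈ S := (hmemS i).mpr ⟨hi.2.1, hi.1⟩
      apply ent_ext i (hSne i hiS)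
      rw [hPe _ i hiS, hYe j₂ i hiS, if_neg hi.2.2]
    have hcard3 : ({i₀, j₁, j₂.1} : Finset (Fin t)).card ≤ 3 := by
      apply le_trans (Finset.card_insert_le _ _)
      have := le_trans (Finset.card_insert_le j₁ {j₂.1}) (by simp : ({j₂.1} : Finset (Fin t)).card + 1 ≤ 2)
      omega
    have hk := (key _ (hPC (fun _ => 0)) _ (hPC (wb j₂ (b j₂))) hXne _ hagree).2 hcard3
    exact hk i₀ (Finset.mem_insert_self _ _)
  -- the final injection and counting
  let Big : Option {i : Fin t // i ∈ S} → Matrix (Fin 1) (Fin (m i₀)) F := fun o =>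
    match o with
    | none => P (fun _ => 0) i₀
    | some j₂ => P (wb j₂ (b j₂)) i₀
  have hBinj : Function.Injective Big := by
    intro o o' hoo'
    cases o with
    | none => cases o' with
      | none => rfl
      | some j₂ => exact absurd hoo' (hX₀ne j₂)
    | some j₂ => cases o' with
      | none => exact absurd hoo'.symm (hX₀ne j₂)
      | some j₃ =>
        by_cases h : j₂ = j₃
        · rw [h]
        · exact absurd hoo' (hYne j₂ j₃ h)
  have hle := Fintype.card_le_of_injective Big hBinj
  have h1 : Fintype.card (Option {i : Fin t // i ∈ S}) = (t - 2) + 1 := by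
    rw [Fintype.card_option, Fintype.card_coe, hScard]
  have h2 : Fintype.card (Matrix (Fin 1) (Fin (m i₀)) F) = q ^ M := by
    have e := Fintype.card_congr ((Matrix.of).symm : Matrix (Fin 1) (Fin (m i₀)) F ≃ (Fin 1 → Fin (m i₀) → F))
    rw [e, Fintype.card_fun, Fintype.card_fun]
    simp [hm₀, hq]
  rw [h1, h2] at hle
  omega
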